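/- If gcd{m ∈ {1,…,k} : c_m ≠ 0} = 1, then every complex root z of P with z ≠ r satisfies |z| < r; that is, r is the unique root of greatest magnitude. -/

import Mathlib

open Polynomial

/-- If `gcd {m ∈ {1,…,k} : c_m ≠ 0} = 1`, then every complex root `z ≠ r` of `P`
satisfies `|z| < r`: the principal root `r` is the unique root of greatest magnitude. -/
theorem principal_root_strictly_dominant
    (k : ℕ) (hk : 1 ≤ k) (c : ℕ → ℕ) (hck : 0 < c k)
    (hgcd : Finset.gcd ((Finset.Icc 1 k).filter fun m => c m ≠ 0) id = 1)
    (P : Polynomial ℂ)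
    (hP : P = X ^ k - ∑ i ∈ Finset.Icc 1 k, C (c i : ℂ) * X ^ (k - i))
    (r : ℝ) (hr : 0 < r) (hroot : P.IsRoot (r : ℂ))
    (huniq : ∀ s : ℝ, 0 < s → P.IsRoot (s : ℂ) → s = r) :
    ∀ z : ℂ, P.IsRoot z → z ≠ (r : ℂ) → ‖z‖ < r := by
  intro z hzroot hne
  have heval : ∀ w : ℂ, P.IsRoot w →
      w ^ k = ∑ i ∈ Finset.Icc 1 k, (c i : ℂ) * w ^ (k - i) := by
    intro w hw
    rw [hP] at hw
    simpa [Polynomial.IsRoot, eval_finset_sum, sub_eq_zero] using hw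
  have hz := heval z hzroot
  have hrC := heval _ hroot
  have hrR : r ^ k = ∑ i ∈ Finset.Icc 1 k, (c i : ℝ) * r ^ (k - i) := by
    exact_mod_cast hrC
  have hkmem : k ∈ Finset.Icc 1 k := Finset.mem_Icc.mpr ⟨hk, le_refl k⟩
  have hz0 : z ≠ 0 := by
    rintro rfl
    rw [zero_pow (by omega), Finset.sum_eq_single k
      (fun i hi hik => by
        have hi' := Finset.mem_Icc.mp hi
        rw [zero_pow (by omega), mul_zero])
      (fun h => absurd hkmem h)] at hz
    have h0 : (c k : ℂ) = 0 := by simpa using hz.symm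
    have h1 : c k = 0 := by exact_mod_cast h0
    omega
  set s : ℝ := ‖z‖ with hs
  have hs0 : 0 < s := hs ▸ norm_pos_iff.mpr hz0
  have htri : s ^ k ≤ ∑ i ∈ Finset.Icc 1 k, (c i : ℝ) * s ^ (k - i) := by
    calc s ^ k = ‖z ^ k‖ := by rw [norm_pow]
      _ = ‖∑ i ∈ Finset.Icc 1 k, (c i : ℂ) * z ^ (k - i)‖ := by rw [hz]
      _ ≤ ∑ i ∈ Finset.Icc 1 k, ‖(c i : ℂ) * z ^ (k - i)‖ :=
          norm_sum_le _ _
      _ = ∑ i ∈ Finset.Icc 1 k, (c i : ℝ) * s ^ (k - i) := by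
          refine Finset.sum_congr rfl fun i _ => ?_
          rw [norm_mul, norm_pow, Complex.norm_natCast]
  have hsr : s ≤ r := by
    by_contra hcon
    push_neg at hcon
    have key : ∑ i ∈ Finset.Icc 1 k, ((c i : ℝ) * s ^ (k - i)) * r ^ k
        < ∑ i ∈ Finset.Icc 1 k, ((c i : ℝ) * r ^ (k - i)) * s ^ k := by
      refine Finset.sum_lt_sum (fun i hi => ?_) ⟨k, hkmem, ?_⟩
      · have hik : i ≤ k := (Finset.mem_Icc.mp hi).2
        have e1 : r ^ k = r ^ (k - i) * r ^ i := by
          rw [← pow_add]; congr 1; omega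
        have e2 : s ^ k = s ^ (k - i) * s ^ i := by
          rw [← pow_add]; congr 1; omega
        rw [e1, e2]
        have hpow : r ^ i ≤ s ^ i := pow_le_pow_left₀ hr.le hcon.le i
        have hA : (0:ℝ) ≤ (c i : ℝ) * s ^ (k - i) * r ^ (k - i) := by positivity
        nlinarith [hA, hpow]
      · have hpow : r ^ k < s ^ k := pow_lt_pow_left₀ hcon hr.le (by omega)
        have hck' : (0:ℝ) < (c k : ℝ) := by exact_mod_cast hck
        simp only [Nat.sub_self, pow_zero, mul_one]
        nlinarith
    rw [← Finset.sum_mul, ← Finset.sum_mul, ← hrR] at key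
    have : ∑ i ∈ Finset.Icc 1 k, (c i : ℝ) * s ^ (k - i) < s ^ k := by
      have hrk : (0:ℝ) < r ^ k := by positivity
      calc ∑ i ∈ Finset.Icc 1 k, (c i : ℝ) * s ^ (k - i)
          = (∑ i ∈ Finset.Icc 1 k, (c i : ℝ) * s ^ (k - i)) * r ^ k / r ^ k := by
            field_simp
        _ < r ^ k * s ^ k / r ^ k := by apply div_lt_div_of_pos_right key hrk
        _ = s ^ k := by field_simp
    linarith
  rcases lt_or_eq_of_le hsr with h | hseq
  · exact h
  · exfalso
    apply hne
    set u : ℂ := z ^ k with hu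
    have habsu : ‖u‖ = r ^ k := by rw [hu, norm_pow, ← hs, hseq]
    have hfg : ∀ i ∈ Finset.Icc 1 k,
        ((starRingEnd ℂ) u * ((c i : ℂ) * z ^ (k - i))).re
          ≤ (c i : ℝ) * r ^ (k - i) * r ^ k := by
      intro i hi
      calc ((starRingEnd ℂ) u * ((c i : ℂ) * z ^ (k - i))).re
          ≤ ‖(starRingEnd ℂ) u * ((c i : ℂ) * z ^ (k - i))‖ :=
            Complex.re_le_norm _
        _ = (c i : ℝ) * r ^ (k - i) * r ^ k := by
            rw [norm_mul, norm_mul, Complex.norm_conj, habsu, norm_pow,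
              Complex.norm_natCast, ← hs, hseq]
            ring
    have hsumf : ∑ i ∈ Finset.Icc 1 k, ((starRingEnd ℂ) u * ((c i : ℂ) * z ^ (k - i))).re
        = r ^ k * r ^ k := by
      rw [← Complex.re_sum, ← Finset.mul_sum, ← hz]
      have : (starRingEnd ℂ) u * u = ((‖u‖ ^ 2 : ℝ) : ℂ) := by
        rw [mul_comm, Complex.mul_conj, Complex.normSq_eq_norm_sq]
      rw [this, habsu, Complex.ofReal_re]
      ring
    have hsumg : ∑ i ∈ Finset.Icc 1 k, (c i : ℝ) * r ^ (k - i) * r ^ k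
        = r ^ k * r ^ k := by
      rw [← Finset.sum_mul, ← hrR, mul_comm]
    have hall := (Finset.sum_eq_sum_iff_of_le hfg).mp (hsumf.trans hsumg.symm)
    have hzi : ∀ i ∈ (Finset.Icc 1 k).filter fun m => c m ≠ 0, z ^ i = (r : ℂ) ^ i := by
      intro i hif
      obtain ⟨hi, hci⟩ := Finset.mem_filter.mp hif
      have hik : i ≤ k := (Finset.mem_Icc.mp hi).2
      set v : ℂ := (starRingEnd ℂ) u * ((c i : ℂ) * z ^ (k - i)) with hv
      have hre : v.re = (c i : ℝ) * r ^ (k - i) * r ^ k := hall i hi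
      have habsv : ‖v‖ = (c i : ℝ) * r ^ (k - i) * r ^ k := by
        rw [hv, norm_mul, norm_mul, Complex.norm_conj, habsu, norm_pow,
          Complex.norm_natCast, ← hs, hseq]
        ring
      have him : v.im = 0 := by
        have h1 : ‖v‖ ^ 2 = v.re ^ 2 + v.im ^ 2 := by
          rw [Complex.sq_norm, Complex.normSq_apply]; ring
        rw [habsv, ← hre] at h1
        nlinarith [sq_nonneg v.im]
      have hveq : v = (((c i : ℝ) * r ^ (k - i) * r ^ k : ℝ) : ℂ) := by
        apply Complex.ext
        · rw [Complex.ofReal_re]; exact hre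
        · rw [Complex.ofReal_im]; exact him
      -- multiply by z^i
      have hmul : v * z ^ i = (c i : ℂ) * ((r ^ k : ℝ) * (r ^ k : ℝ) : ℝ) := by
        rw [hv]
        have hzk : z ^ (k - i) * z ^ i = u := by
          rw [hu, ← pow_add]; congr 1; omega
        have hcu : (starRingEnd ℂ) u * u = (((r ^ k) * (r ^ k) : ℝ) : ℂ) := by
          rw [mul_comm, Complex.mul_conj, Complex.normSq_eq_norm_sq, habsu]
          push_cast
          ring
        calc (starRingEnd ℂ) u * ((c i : ℂ) * z ^ (k - i)) * z ^ i
            = (c i : ℂ) * ((starRingEnd ℂ) u * (z ^ (k - i) * z ^ i)) := by ring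
          _ = (c i : ℂ) * ((starRingEnd ℂ) u * u) := by rw [hzk]
          _ = (c i : ℂ) * ((r ^ k : ℝ) * (r ^ k : ℝ) : ℝ) := by rw [hcu]
      rw [hveq] at hmul
      have hci' : (0:ℝ) < (c i : ℝ) := by exact_mod_cast Nat.pos_of_ne_zero hci
      have hC0 : (((c i : ℝ) * r ^ (k - i) * r ^ k : ℝ) : ℂ) ≠ 0 := by
        simp only [ne_eq, Complex.ofReal_eq_zero]
        positivity
      have hr2 : (((c i : ℝ) * r ^ (k - i) * r ^ k : ℝ) : ℂ) * (r : ℂ) ^ i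
          = (c i : ℂ) * ((r ^ k : ℝ) * (r ^ k : ℝ) : ℝ) := by
        push_cast
        have hrp : (r : ℂ) ^ (k - i) * (r : ℂ) ^ i = (r : ℂ) ^ k := by
          rw [← pow_add]; congr 1; omega
        linear_combination (c i : ℂ) * (r : ℂ) ^ k * hrp
      exact mul_left_cancel₀ hC0 (hmul.trans hr2.symm)
    have hrC0 : (r : ℂ) ≠ 0 := by
      simp only [ne_eq, Complex.ofReal_eq_zero]
      exact hr.ne'
    have hw : ∀ i ∈ (Finset.Icc 1 k).filter fun m => c m ≠ 0, (z / (r : ℂ)) ^ i = 1 := by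
      intro i hi
      rw [div_pow, hzi i hi, div_self (pow_ne_zero _ hrC0)]
    have hdvd : orderOf (z / (r : ℂ)) ∣ 1 := by
      rw [← hgcd]
      exact Finset.dvd_gcd fun i hi => orderOf_dvd_of_pow_eq_one (hw i hi)
    have hone : z / (r : ℂ) = 1 := orderOf_eq_one_iff.mp (Nat.dvd_one.mp hdvd)
    field_simp at hone
    exact hone
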